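/- Define real sequences (a_n)_{n≥1} and (b_n)_{n≥1} by a_1 = b_1 = 1, a_{n+1} = a_n + b_n, and b_{n+1} = a_n + n·b_n for n ≥ 1. Then a_n/b_n → 0 as n → ∞, and moreover the series ∑_{n≥1} a_n/b_{n+1} converges (indeed a_n/b_{n+1} ≤ 2/(n(n-1)) for n ≥ 2). -/

import Mathlib

open Filter

/-- For the sequences `a_1 = b_1 = 1`, `a_{n+1} = a_n + b_n`,
`b_{n+1} = a_n + n·b_n`, one has `a_n/b_n → 0`, the series `∑ a_n/b_{n+1}`
converges, and indeed `a_n/b_{n+1} ≤ 2/(n(n-1))` for `n ≥ 2`. -/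
theorem stmt16 (a b : ℕ → ℝ) (ha1 : a 1 = 1) (hb1 : b 1 = 1)
    (ha : ∀ n, 1 ≤ n → a (n + 1) = a n + b n)
    (hb : ∀ n, 1 ≤ n → b (n + 1) = a n + n * b n) :
    Tendsto (fun n => a n / b n) atTop (nhds 0) ∧
    Summable (fun n => a (n + 1) / b (n + 2)) ∧
    ∀ n : ℕ, 2 ≤ n → a n / b (n + 1) ≤ 2 / (n * (n - 1)) := by
  have key : ∀ n, 1 ≤ n → 0 < a n ∧ 0 < b n ∧ a n ≤ b n := by
    intro n hn
    induction n, hn using Nat.le_induction with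
    | base => simp [ha1, hb1]
    | succ n hn ih =>
      obtain ⟨hpa, hpb, hab⟩ := ih
      have hn1 : (1:ℝ) ≤ n := by exact_mod_cast hn
      refine ⟨?_, ?_, ?_⟩
      · rw [ha n hn]; linarith
      · rw [hb n hn]; nlinarith
      · rw [ha n hn, hb n hn]; nlinarith
  have hstep : ∀ m : ℕ, 1 ≤ m → a (m+1) / b (m+1) ≤ 2 / m := by
    intro m hm
    obtain ⟨hpa, hpb, hab⟩ := key m hm
    have hm1 : (1:ℝ) ≤ m := by exact_mod_cast hm
    rw [ha m hm, hb m hm]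
    have h1 : a m + b m ≤ 2 * b m := by linarith
    have h2 : (m:ℝ) * b m ≤ a m + m * b m := by linarith
    have h3 : (0:ℝ) < (m:ℝ) * b m := by positivity
    calc (a m + b m) / (a m + m * b m) ≤ 2 * b m / ((m:ℝ) * b m) :=
          div_le_div₀ (by positivity) h1 h3 h2
      _ = 2 / m := by
          rw [mul_comm (m:ℝ) (b m), mul_comm 2 (b m), mul_div_mul_left _ _ hpb.ne']
  have hmain : ∀ m : ℕ, 1 ≤ m → a (m+1) / b (m+2) ≤ 2 / ((m+1) * m) := by
    intro m hm
    obtain ⟨hpa, hpb, hab⟩ := key (m+1) (by omega)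
    have hm1 : (1:ℝ) ≤ m := by exact_mod_cast hm
    have hb2 := hb (m+1) (by omega)
    have hA : a (m+1) ≤ 2 / m * b (m+1) := (div_le_iff₀ hpb).1 (hstep m hm)
    have hB : ((m:ℝ)+1) * b (m+1) ≤ b (m+2) := by
      rw [hb2]; push_cast; nlinarith [(key (m+1) (by omega)).1]
    have hBpos : 0 < ((m:ℝ)+1) * b (m+1) := by positivity
    have hm0 : (m:ℝ) ≠ 0 := by linarith
    calc a (m+1) / b (m+2) ≤ (2 / m * b (m+1)) / (((m:ℝ)+1) * b (m+1)) :=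
          div_le_div₀ (by positivity) hA hBpos hB
      _ = 2 / ((m+1) * m) := by field_simp
  refine ⟨?_, ?_, ?_⟩
  · have h1 : Tendsto (fun n : ℕ => a (n+1) / b (n+1)) atTop (nhds 0) := by
      apply squeeze_zero'
        (eventually_atTop.2 ⟨1, fun n hn =>
          div_nonneg (key (n+1) (by omega)).1.le (key (n+1) (by omega)).2.1.le⟩)
        (eventually_atTop.2 ⟨1, fun n hn => hstep n hn⟩)
        (tendsto_const_div_atTop_nhds_zero_nat 2)
    exact (tendsto_add_atTop_iff_nat 1).1 h1
  · have hbase : Summable (fun n : ℕ => 1 / ((n:ℝ)+1)^2) := by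
      have h0 : Summable (fun n : ℕ => 1 / (n:ℝ)^2) :=
        Real.summable_one_div_nat_pow.2 one_lt_two
      have := (summable_nat_add_iff 1).2 h0
      refine this.congr fun n => by push_cast; ring
    have hsum : Summable (fun n : ℕ => a (n+2) / b (n+3)) := by
      apply Summable.of_nonneg_of_le
        (fun n => div_nonneg (key (n+2) (by omega)).1.le (key (n+3) (by omega)).2.1.le)
        ?_ (hbase.mul_left 2)
      intro n
      have h := hmain (n+1) (by omega)
      push_cast at h
      have hx : (0:ℝ) < (n:ℝ)+1 := by positivity
      calc a (n+2) / b (n+3) ≤ 2 / (((n:ℝ)+1+1) * ((n:ℝ)+1)) := h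
        _ ≤ 2 / ((n:ℝ)+1)^2 :=
            div_le_div_of_nonneg_left (by norm_num) (by positivity) (by nlinarith)
        _ = 2 * (1 / ((n:ℝ)+1)^2) := by ring
    exact (summable_nat_add_iff 1).1 hsum
  · intro n hn
    obtain ⟨m, rfl⟩ : ∃ m, n = m + 1 := ⟨n-1, by omega⟩
    have h := hmain m (by omega)
    have e : (↑(m+1) : ℝ) * ((↑(m+1):ℝ) - 1) = ((m:ℝ)+1) * m := by push_cast; ring
    rw [e]
    exact h
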